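/- For every ν ≥ 1/2 and every x > 0, I_{ν−1}(x)/I_ν(x) > (ν − 1/2 + √(ν² − 1/4 + x²))/x. -/

import Mathlib

/-- The modified Bessel function of the first kind,
`I_ν(x) = ∑_{k=0}^∞ (x/2)^{2k+ν} / (k! Γ(k+ν+1))`
(here `1/Γ` vanishes at nonpositive integer arguments, since `Real.Gamma` is `0` there). -/
noncomputable def besselI (ν x : ℝ) : ℝ :=
  ∑' k : ℕ, (x / 2) ^ (2 * (k : ℝ) + ν) / ((Nat.factorial k : ℝ) * Real.Gamma ((k : ℝ) + ν + 1))

open Finset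

namespace BesselAux

/-- ascending factorial product -/
noncomputable def P (t : ℝ) (m : ℕ) : ℝ := ∏ i ∈ range m, (t + i)

lemma P_zero (t : ℝ) : P t 0 = 1 := by simp [P]

lemma P_succ (t : ℝ) (m : ℕ) : P t (m + 1) = P t m * (t + m) := by
  simp [P, prod_range_succ]

lemma P_succ' (t : ℝ) (m : ℕ) : P t (m + 1) = t * P (t + 1) m := by
  have h : ∀ i ∈ range m, t + ((i + 1 : ℕ) : ℝ) = (t + 1) + i := fun i _ => by push_cast; ring
  rw [P, prod_range_succ', prod_congr rfl h]
  simp [P, mul_comm]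

lemma P_pos {t : ℝ} (ht : 0 < t) (m : ℕ) : 0 < P t m := by
  refine prod_pos fun i _ => by positivity

/-- simple Chu-Vandermonde for ascending factorials -/
lemma vandermonde (n : ℕ) (A B : ℝ) :
    ∑ j ∈ range (n + 1), (n.choose j : ℝ) * P A j * P B (n - j) = P (A + B) n := by
  induction n with
  | zero => simp [P]
  | succ n ih =>
    have expand : P (A + B) (n + 1) = P (A + B) n * (A + B + n) := P_succ _ _
    rw [expand, ← ih, sum_mul]
    have lhs_eq : ∀ j ∈ range (n + 1),
        (n.choose j : ℝ) * P A j * P B (n - j) * (A + B + n)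
          = (n.choose j : ℝ) * P A (j + 1) * P B (n - j)
            + (n.choose j : ℝ) * P A j * P B (n - j + 1) := by
      intro j hj
      have hjn : j ≤ n := by simpa [Nat.lt_succ_iff] using hj
      have h1 : P A (j + 1) = P A j * (A + j) := P_succ _ _
      have h2 : P B (n - j + 1) = P B (n - j) * (B + ((n - j : ℕ) : ℝ)) := P_succ _ _
      have hc : ((n - j : ℕ) : ℝ) = (n : ℝ) - j := by
        push_cast [Nat.cast_sub hjn]; ring
      rw [h1, h2, hc]; ring
    rw [sum_congr rfl lhs_eq, sum_add_distrib]
    rw [Finset.sum_range_succ' (fun j => ((n+1).choose j : ℝ) * P A j * P B (n+1-j)) (n+1)]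
    have step1 : ∀ i ∈ range (n+1),
        (((n+1).choose (i+1) : ℕ) : ℝ) * P A (i+1) * P B (n+1-(i+1))
        = (n.choose i : ℝ) * P A (i+1) * P B (n-i)
          + (n.choose (i+1) : ℝ) * P A (i+1) * P B (n-i) := by
      intro i _
      have hch : (n+1).choose (i+1) = n.choose i + n.choose (i+1) := Nat.choose_succ_succ n i
      have h2 : n + 1 - (i + 1) = n - i := by omega
      rw [hch, h2]
      push_cast
      ring
    rw [sum_congr rfl step1, sum_add_distrib]
    have hA2 : ∑ i ∈ range (n+1), (n.choose (i+1) : ℝ) * P A (i+1) * P B (n-i)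
        = ∑ i ∈ range n, (n.choose (i+1) : ℝ) * P A (i+1) * P B (n-i) := by
      rw [sum_range_succ]
      simp
    have hB2 : ∑ j ∈ range (n+1), (n.choose j : ℝ) * P A j * P B (n-j+1)
        = ∑ i ∈ range n, (n.choose (i+1) : ℝ) * P A (i+1) * P B (n-i) + P B (n+1) := by
      rw [Finset.sum_range_succ' (fun j => (n.choose j : ℝ) * P A j * P B (n-j+1)) n]
      simp only [Nat.choose_zero_right, Nat.cast_one, one_mul, P_zero, Nat.sub_zero]
      congr 1
      refine sum_congr rfl fun i hi => ?_
      have h3 : n - (i+1) + 1 = n - i := by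
        have := mem_range.mp hi; omega
      rw [h3]
    rw [hA2, hB2]
    simp only [Nat.choose_zero_right, Nat.cast_one, one_mul, P_zero, Nat.sub_zero]
    ring


lemma P_reflect (t : ℝ) (m : ℕ) : P t m = (-1) ^ m * P (1 - t - m) m := by
  have : ∀ j ∈ range m, (t + ((m - 1 - j : ℕ) : ℝ)) = (-1) * (1 - t - m + j) := by
    intro j hj
    have hj' := mem_range.mp hj
    have : ((m - 1 - j : ℕ) : ℝ) = (m : ℝ) - 1 - j := by
      push_cast [Nat.cast_sub (by omega : j ≤ m - 1), Nat.cast_sub (by omega : 1 ≤ m)]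
      ring
    rw [this]; ring
  rw [P, P, ← prod_range_reflect (fun i => (t + i : ℝ)) m, prod_congr rfl this,
    prod_mul_distrib, prod_const, card_range]

lemma gamma_P {t : ℝ} (ht : 0 < t) (m : ℕ) :
    Real.Gamma (t + m) = Real.Gamma t * P t m := by
  induction m with
  | zero => simp [P]
  | succ m ih =>
    have h : t + ((m : ℝ) + 1) = (t + m) + 1 := by ring
    rw [Nat.cast_add, Nat.cast_one, h, Real.Gamma_add_one (by positivity),
      ih, P_succ]
    ring


lemma Vclosed {a : ℝ} (ha : 0 < a) (n : ℕ) :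
    ∑ j ∈ range (n + 1),
        1 / ((j.factorial : ℝ) * (n - j).factorial * Real.Gamma (a + j) * Real.Gamma (a + (n - j : ℕ)))
      = P (2 * a + n - 1) n / (n.factorial * Real.Gamma (a + n) ^ 2) := by
  have key : ∑ j ∈ range (n + 1),
      (n.choose j : ℝ) * P (a + j) (n - j) * P (a + (n - j : ℕ)) j
      = P (2 * a + n - 1) n := by
    have e1 : ∀ j ∈ range (n + 1),
        (n.choose j : ℝ) * P (a + j) (n - j) * P (a + (n - j : ℕ)) j
        = (-1 : ℝ) ^ n * ((n.choose j : ℝ) * P (1 - a - n) j * P (1 - a - n) (n - j)) := by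
      intro j hj
      have hjn : j ≤ n := by simpa [Nat.lt_succ_iff] using hj
      rw [P_reflect (a + j) (n - j), P_reflect (a + ((n - j : ℕ) : ℝ)) j]
      have c1 : 1 - (a + j) - ((n - j : ℕ) : ℝ) = 1 - a - n := by
        push_cast [Nat.cast_sub hjn]; ring
      have c2 : 1 - (a + ((n - j : ℕ) : ℝ)) - (j : ℝ) = 1 - a - n := by
        push_cast [Nat.cast_sub hjn]; ring
      rw [c1, c2]
      have hpow : (-1 : ℝ) ^ (n - j) * (-1 : ℝ) ^ j = (-1) ^ n := by
        rw [← pow_add]; congr 1; omega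
      linear_combination ((n.choose j : ℝ) * P (1 - a - (n:ℝ)) (n - j) * P (1 - a - (n:ℝ)) j) * hpow
    rw [sum_congr rfl e1, ← mul_sum, vandermonde n (1 - a - n) (1 - a - n)]
    rw [P_reflect (1 - a - n + (1 - a - n)) n]
    have : 1 - (1 - a - (n:ℝ) + (1 - a - n)) - n = 2 * a + n - 1 := by ring
    rw [this, ← mul_assoc, ← pow_add]
    simp [pow_mul]
  rw [← key, sum_div]
  refine sum_congr rfl fun j hj => ?_
  have hjn : j ≤ n := by simpa [Nat.lt_succ_iff] using hj
  have hg1 : (0:ℝ) < Real.Gamma (a + j) := Real.Gamma_pos_of_pos (by positivity)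
  have hg2 : (0:ℝ) < Real.Gamma (a + ((n - j : ℕ) : ℝ)) := Real.Gamma_pos_of_pos (by positivity)
  have hgn : (0:ℝ) < Real.Gamma (a + n) := Real.Gamma_pos_of_pos (by positivity)
  have hf1 : (0:ℝ) < (j.factorial : ℝ) := by exact_mod_cast j.factorial_pos
  have hf2 : (0:ℝ) < ((n - j).factorial : ℝ) := by exact_mod_cast (n - j).factorial_pos
  have hfn : (0:ℝ) < (n.factorial : ℝ) := by exact_mod_cast n.factorial_pos
  rw [div_eq_div_iff (by positivity) (by positivity)]
  have hΓ1 : Real.Gamma (a + n) = Real.Gamma (a + j) * P (a + j) (n - j) := by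
    have h := gamma_P (t := a + j) (by positivity) (n - j)
    rw [← h]; congr 1; push_cast [Nat.cast_sub hjn]; ring
  have hΓ2 : Real.Gamma (a + n) = Real.Gamma (a + ((n - j : ℕ) : ℝ)) * P (a + ((n - j : ℕ) : ℝ)) j := by
    have h := gamma_P (t := a + ((n - j : ℕ) : ℝ)) (by positivity) j
    rw [← h]; congr 1; push_cast [Nat.cast_sub hjn]; ring
  have hfac : (n.factorial : ℝ) = (n.choose j : ℝ) * j.factorial * (n - j).factorial := by
    exact_mod_cast (Nat.choose_mul_factorial_mul_factorial hjn).symm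
  rw [hfac, pow_two]
  nth_rewrite 1 [hΓ1]
  nth_rewrite 1 [hΓ2]
  ring

/-- coefficients of the Bessel-type power series -/
noncomputable def bc (μ : ℝ) (k : ℕ) : ℝ := 1 / (k.factorial * Real.Gamma (k + μ + 1))

lemma bc_pos {μ : ℝ} (hμ : -1 < μ) (k : ℕ) : 0 < bc μ k := by
  have h : (0:ℝ) < Real.Gamma (k + μ + 1) := Real.Gamma_pos_of_pos (by
    have : (0:ℝ) ≤ k := Nat.cast_nonneg k
    linarith)
  have hf : (0:ℝ) < (k.factorial : ℝ) := by exact_mod_cast k.factorial_pos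
  exact div_pos one_pos (by positivity)

lemma bc_shift {μ : ℝ} (hμ : -1 < μ) (j : ℕ) : ((j : ℝ) + 1) * bc μ (j + 1) = bc (μ + 1) j := by
  have h2 : ((j:ℝ) + (μ + 1) + 1) = ((j:ℝ) + μ + 1) + 1 := by ring
  simp only [bc]
  rw [show (((j+1 : ℕ)):ℝ) + μ + 1 = ((j:ℝ) + μ + 1) + 1 by push_cast; ring, h2,
    Nat.factorial_succ]
  have hf : ((j.factorial : ℝ)) ≠ 0 := by exact_mod_cast j.factorial_pos.ne'
  have hG : Real.Gamma (((j:ℝ) + μ + 1) + 1) ≠ 0 := by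
    refine (Real.Gamma_pos_of_pos ?_).ne'
    have : (0:ℝ) ≤ j := Nat.cast_nonneg j
    linarith
  have hj : ((j:ℝ) + 1) ≠ 0 := by positivity
  push_cast
  field_simp

lemma Vbc {μ : ℝ} (hμ : 0 < μ + 1) (n : ℕ) :
    ∑ j ∈ range (n + 1), bc μ j * bc μ (n - j)
      = P (2 * μ + n + 1) n / (n.factorial * Real.Gamma (μ + 1 + n) ^ 2) := by
  have e : ∀ j ∈ range (n + 1), bc μ j * bc μ (n - j)
      = 1 / ((j.factorial : ℝ) * (n - j).factorial * Real.Gamma ((μ+1) + j)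
          * Real.Gamma ((μ+1) + (n - j : ℕ))) := by
    intro j _
    simp only [bc]
    rw [show ((j:ℝ) + μ + 1) = (μ + 1) + j by ring,
      show (((n-j : ℕ)):ℝ) + μ + 1 = (μ + 1) + ((n-j:ℕ):ℝ) by ring]
    rw [div_mul_div_comm, one_mul]
    ring_nf
  rw [sum_congr rfl e, Vclosed hμ n]
  rw [show 2 * (μ + 1) + (n:ℝ) - 1 = 2 * μ + n + 1 by ring]

lemma keyineq {ν : ℝ} (hν : 1/2 ≤ ν) (n : ℕ) :
    4 * ∑ j ∈ range (n + 1), bc ν j * bc ν (n - j)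
      ≤ ∑ j ∈ range (n + 2), ((2 * j + ν + 1/2) * bc ν j) *
            ((2 * ((n + 1 - j : ℕ) : ℝ) + ν + 1/2) * bc ν (n + 1 - j))
        - (ν ^ 2 - 1/4) * ∑ j ∈ range (n + 2), bc ν j * bc ν (n + 1 - j) := by
  have hν1 : (-1:ℝ) < ν := by linarith
  -- Step 1: rewrite RHS as 4*J + C*V(n+1)
  have rhs_eq : ∑ j ∈ range (n + 2), ((2 * j + ν + 1/2) * bc ν j) *
            ((2 * ((n + 1 - j : ℕ) : ℝ) + ν + 1/2) * bc ν (n + 1 - j))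
        - (ν ^ 2 - 1/4) * ∑ j ∈ range (n + 2), bc ν j * bc ν (n + 1 - j)
      = 4 * (∑ j ∈ range (n + 2), (j:ℝ) * ((n + 1 - j : ℕ) : ℝ) * (bc ν j * bc ν (n + 1 - j)))
        + ((2*ν+1) * (n+1) + ν + 1/2) * ∑ j ∈ range (n + 2), bc ν j * bc ν (n + 1 - j) := by
    rw [mul_sum, mul_sum, mul_sum, ← sum_sub_distrib, ← sum_add_distrib]
    refine sum_congr rfl fun j hj => ?_
    have hjn : j ≤ n + 1 := by simpa [Nat.lt_succ_iff] using hj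
    have hk : ((n + 1 - j : ℕ) : ℝ) = (n:ℝ) + 1 - j := by
      push_cast [Nat.cast_sub hjn]; ring
    rw [hk]; ring
  rw [rhs_eq]
  -- Case n = 0
  match n with
  | 0 =>
    have hG : (0:ℝ) < Real.Gamma (ν + 1) := Real.Gamma_pos_of_pos (by linarith)
    have hb1 : (ν + 1) * bc ν 1 = bc ν 0 := by
      simp only [bc, Nat.factorial_one, Nat.factorial_zero, Nat.cast_one, Nat.cast_zero]
      rw [show (1:ℝ) + ν + 1 = (ν + 1) + 1 by ring,
        Real.Gamma_add_one (by positivity : ν + 1 > 0).ne',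
        show (0:ℝ) + ν + 1 = ν + 1 by ring]
      field_simp
    have h0 : (0:ℝ) < bc ν 0 := bc_pos hν1 0
    have h1 : (0:ℝ) < bc ν 1 := bc_pos hν1 1
    simp only [sum_range_succ, sum_range_one]
    norm_num
    have hq : 0 ≤ (2*ν - 1) * (ν + 1) * (bc ν 1 * bc ν 1) := by
      have : (0:ℝ) ≤ 2*ν - 1 := by linarith
      have h2 : (0:ℝ) ≤ ν + 1 := by linarith
      positivity
    nlinarith [hb1, hq]
  | m + 1 =>
    -- J = V (ν+1) m
    have hJ : ∑ j ∈ range (m + 1 + 2), (j:ℝ) * ((m + 1 + 1 - j : ℕ) : ℝ) * (bc ν j * bc ν (m + 1 + 1 - j))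
        = ∑ i ∈ range (m + 1), bc (ν+1) i * bc (ν+1) (m - i) := by
      rw [Finset.sum_range_succ' (fun j => (j:ℝ) * ((m + 1 + 1 - j : ℕ) : ℝ) * (bc ν j * bc ν (m + 1 + 1 - j))) (m+2)]
      simp only [Nat.cast_zero, zero_mul, add_zero, Nat.succ_sub_succ_eq_sub]
      rw [sum_range_succ]
      simp only [Nat.sub_self, Nat.cast_zero, mul_zero, zero_mul, add_zero]
      refine sum_congr rfl fun i hi => ?_
      have him : i ≤ m := by simpa [Nat.lt_succ_iff] using hi
      have e1 : ((i:ℝ) + 1) * bc ν (i+1) = bc (ν+1) i := bc_shift hν1 i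
      have e2 : (((m - i : ℕ):ℝ) + 1) * bc ν ((m-i)+1) = bc (ν+1) (m-i) := bc_shift hν1 (m-i)
      have h3 : m + 1 - i = (m - i) + 1 := by omega
      rw [h3]
      push_cast
      rw [← e1, ← e2]
      push_cast
      ring
    rw [hJ]
    rw [show m + 1 + 2 = (m + 2) + 1 from rfl]
    rw [Vbc (by linarith : (0:ℝ) < ν + 1) (m+1),
      Vbc (by linarith : (0:ℝ) < ν + 1) (m+2),
      Vbc (by linarith : (0:ℝ) < (ν+1) + 1) m]
    have hmp : (0:ℝ) < ν + (m:ℝ) + 2 := by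
      have : (0:ℝ) ≤ (m:ℝ) := Nat.cast_nonneg m
      linarith
    have hgpos : (0:ℝ) < Real.Gamma (ν + (m:ℝ) + 2) := Real.Gamma_pos_of_pos hmp
    have hP1 : P (2 * ν + ((m+1:ℕ):ℝ) + 1) (m + 1) = (2*ν+(m:ℝ)+2) * P (2*ν+(m:ℝ)+3) m := by
      rw [show (2 * ν + ((m+1:ℕ):ℝ) + 1) = (2*ν+(m:ℝ)+2) by push_cast; ring, P_succ',
        show (2*ν+(m:ℝ)+2) + 1 = 2*ν+(m:ℝ)+3 by ring]
    have hP2 : P (2 * ν + ((m+2:ℕ):ℝ) + 1) (m + 2) = P (2*ν+(m:ℝ)+3) m * ((2*ν+2*(m:ℝ)+3) * (2*ν+2*(m:ℝ)+4)) := by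
      rw [show (2 * ν + ((m+2:ℕ):ℝ) + 1) = (2*ν+(m:ℝ)+3) by push_cast; ring, P_succ, P_succ]
      push_cast
      ring
    have hP3 : P (2 * (ν+1) + (m:ℝ) + 1) m = P (2*ν+(m:ℝ)+3) m := by
      rw [show 2 * (ν+1) + (m:ℝ) + 1 = 2*ν+(m:ℝ)+3 by ring]
    have hG1 : Real.Gamma (ν + 1 + ((m+1:ℕ):ℝ)) = Real.Gamma (ν + (m:ℝ) + 2) := by
      congr 1; push_cast; ring
    have hG3 : Real.Gamma (ν + 1 + 1 + (m:ℝ)) = Real.Gamma (ν + (m:ℝ) + 2) := by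
      congr 1; ring
    have hG2 : Real.Gamma (ν + 1 + ((m+2:ℕ):ℝ)) = (ν+(m:ℝ)+2) * Real.Gamma (ν + (m:ℝ) + 2) := by
      rw [show (ν + 1 + ((m+2:ℕ):ℝ)) = (ν+(m:ℝ)+2) + 1 by push_cast; ring,
        Real.Gamma_add_one hmp.ne']
    have hf1 : (((m+1).factorial : ℕ):ℝ) = ((m:ℝ)+1) * (m.factorial:ℝ) := by
      rw [Nat.factorial_succ]; push_cast; ring
    have hf2 : (((m+2).factorial : ℕ):ℝ) = ((m:ℝ)+2) * (((m:ℝ)+1) * (m.factorial:ℝ)) := by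
      rw [Nat.factorial_succ, Nat.factorial_succ]; push_cast; ring
    rw [hP1, hP2, hP3, hG1, hG2, hG3, hf1, hf2]
    rw [← sub_nonneg]
    have hW : (0:ℝ) < P (2*ν+(m:ℝ)+3) m := P_pos (by linarith) m
    have hfpos : (0:ℝ) < (m.factorial : ℝ) := by exact_mod_cast m.factorial_pos
    have hX : (0:ℝ) ≤ ((ν+(m:ℝ)+2)*(2*ν-1)*(2*ν+1)) *
        (P (2*ν+(m:ℝ)+3) m / ((((m:ℝ)+2)*(((m:ℝ)+1)*(m.factorial:ℝ))) * ((ν+(m:ℝ)+2)*Real.Gamma (ν+(m:ℝ)+2))^2)) := by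
      apply mul_nonneg
      · apply mul_nonneg (mul_nonneg hmp.le (by linarith)) (by linarith)
      · apply div_nonneg hW.le
        positivity
    convert hX using 1
    have h1 : ((m:ℝ)+1) ≠ 0 := by positivity
    have h2 : ((m:ℝ)+2) ≠ 0 := by positivity
    have h3 : (m.factorial:ℝ) ≠ 0 := hfpos.ne'
    have h4 : Real.Gamma (ν + (m:ℝ) + 2) ≠ 0 := hgpos.ne'
    have h5 : (ν+(m:ℝ)+2) ≠ 0 := hmp.ne'
    push_cast
    field_simp
    ring

lemma bc_succ_le {μ : ℝ} (hμ : -(1/2 : ℝ) ≤ μ) (k : ℕ) :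
    bc μ (k + 1) * ((k:ℝ) + 1) ≤ bc μ k * 2 := by
  have hμ1 : (-1:ℝ) < μ := by linarith
  have hk : (0:ℝ) < (k:ℝ) + μ + 1 := by
    have : (0:ℝ) ≤ (k:ℝ) := Nat.cast_nonneg k
    linarith
  have hkf : (0:ℝ) < (k.factorial : ℝ) := by exact_mod_cast k.factorial_pos
  have hg : (0:ℝ) < Real.Gamma ((k:ℝ) + μ + 1) := Real.Gamma_pos_of_pos hk
  have hrec : bc μ (k + 1) * (((k:ℝ) + 1) * ((k:ℝ) + μ + 1)) = bc μ k := by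
    simp only [bc]
    rw [show ((k+1:ℕ):ℝ) + μ + 1 = ((k:ℝ) + μ + 1) + 1 by push_cast; ring,
      Real.Gamma_add_one hk.ne', Nat.factorial_succ]
    push_cast
    field_simp
  have hb1 : (0:ℝ) < bc μ (k+1) := bc_pos hμ1 (k+1)
  have hhalf : (1/2 : ℝ) ≤ (k:ℝ) + μ + 1 := by
    have : (0:ℝ) ≤ (k:ℝ) := Nat.cast_nonneg k
    linarith
  nlinarith [hrec, hb1, hhalf,
    mul_nonneg (mul_nonneg hb1.le (by positivity : (0:ℝ) ≤ (k:ℝ)+1))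
      (by linarith : (0:ℝ) ≤ (k:ℝ) + μ + 1 - 1/2)]

lemma bc_le {μ : ℝ} (hμ : -(1/2 : ℝ) ≤ μ) (k : ℕ) :
    bc μ k ≤ bc μ 0 * 2 ^ k / k.factorial := by
  induction k with
  | zero => simp
  | succ k ih =>
    have hμ1 : (-1:ℝ) < μ := by linarith
    have h1 := bc_succ_le hμ k
    have hb1 : (0:ℝ) < bc μ (k+1) := bc_pos hμ1 (k+1)
    have hk1 : (0:ℝ) < (k:ℝ) + 1 := by positivity
    have hkf : (0:ℝ) < (k.factorial : ℝ) := by exact_mod_cast k.factorial_pos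
    have hb0 : (0:ℝ) < bc μ 0 := bc_pos hμ1 0
    have hfs : (((k+1).factorial : ℕ):ℝ) = ((k:ℝ)+1) * (k.factorial:ℝ) := by
      rw [Nat.factorial_succ]; push_cast; ring
    rw [hfs]
    rw [div_eq_mul_inv, mul_inv, pow_succ]
    -- bc μ (k+1) ≤ bc μ k * 2 / (k+1) ≤ (bc0 2^k/k!) * 2/(k+1)
    have h2 : bc μ (k+1) ≤ bc μ k * 2 / ((k:ℝ)+1) := by
      rw [le_div_iff₀ hk1]; linarith [h1]
    have h3 : bc μ k * 2 / ((k:ℝ)+1) ≤ (bc μ 0 * 2^k / k.factorial) * 2 / ((k:ℝ)+1) := by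
      gcongr
    calc bc μ (k+1) ≤ bc μ k * 2 / ((k:ℝ)+1) := h2
      _ ≤ (bc μ 0 * 2^k / k.factorial) * 2 / ((k:ℝ)+1) := h3
      _ = bc μ 0 * (2^k * 2) * (((k:ℝ)+1)⁻¹ * ((k.factorial:ℝ))⁻¹) := by
          field_simp

lemma summ_master {μ y A B : ℝ} (hμ : -(1/2:ℝ) ≤ μ) (hy : 0 < y) (hA : 0 ≤ A) (hB : 0 ≤ B) :
    Summable (fun k : ℕ => (A + B * k) * (bc μ k * y ^ k)) := by
  have hμ1 : (-1:ℝ) < μ := by linarith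
  have hb0 : (0:ℝ) < bc μ 0 := bc_pos hμ1 0
  apply Summable.of_nonneg_of_le
    (fun k => mul_nonneg (by positivity) (mul_nonneg (bc_pos hμ1 k).le (by positivity)))
    (fun k => ?_)
    (((Real.summable_pow_div_factorial (4*y)).mul_left ((A+B) * bc μ 0)))
  have h2k : ((k:ℝ) + 1) ≤ 2 ^ k := by
    exact_mod_cast Nat.lt_two_pow_self (n := k)
  have h1 : (1:ℝ) ≤ 2 ^ k := by
    have : ((1:ℕ):ℝ) ≤ ((2^k : ℕ):ℝ) := by exact_mod_cast Nat.one_le_two_pow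
    simpa using this
  have hk0 : (0:ℝ) ≤ (k:ℝ) := Nat.cast_nonneg k
  have hAB : A + B * k ≤ (A + B) * 2 ^ k := by
    nlinarith [mul_le_mul_of_nonneg_left h2k hB, mul_le_mul_of_nonneg_left h1 hA]
  have hbck : (0:ℝ) ≤ bc μ k * y ^ k := mul_nonneg (bc_pos hμ1 k).le (by positivity)
  calc (A + B * k) * (bc μ k * y ^ k)
      ≤ ((A + B) * 2 ^ k) * (bc μ k * y ^ k) := mul_le_mul_of_nonneg_right hAB hbck
    _ ≤ ((A + B) * 2 ^ k) * ((bc μ 0 * 2 ^ k / k.factorial) * y ^ k) := by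
        apply mul_le_mul_of_nonneg_left
          (mul_le_mul_of_nonneg_right (bc_le hμ k) (by positivity))
        positivity
    _ = (A + B) * bc μ 0 * ((4 * y) ^ k / k.factorial) := by
        rw [show (4:ℝ) * y = 2 * (2 * y) by ring, mul_pow, mul_pow]
        ring

lemma besselI_series {μ x : ℝ} (hx : 0 < x) :
    besselI μ x = (x/2) ^ μ * ∑' k : ℕ, bc μ k * ((x/2)^2) ^ k := by
  rw [besselI, ← tsum_mul_left]
  refine tsum_congr fun k => ?_
  have ht : (0:ℝ) < x / 2 := by linarith
  have hpow : (x/2) ^ (2 * (k:ℝ) + μ) = ((x/2)^2) ^ k * (x/2) ^ μ := by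
    rw [Real.rpow_add ht, show (2 * (k:ℝ)) = ((2*k : ℕ) : ℝ) by push_cast; ring,
      Real.rpow_natCast, pow_mul]
  rw [hpow, bc]
  ring

noncomputable def ucf (ν : ℝ) (k : ℕ) : ℝ := (2 * (k:ℝ) + ν + 1/2) * bc ν k
noncomputable def Wc (ν : ℝ) (n : ℕ) : ℝ := ∑ k ∈ range (n+1), ucf ν k * ucf ν (n-k)
noncomputable def Vc (ν : ℝ) (n : ℕ) : ℝ := ∑ k ∈ range (n+1), bc ν k * bc ν (n-k)

lemma D0pos {ν : ℝ} (hν : 1/2 ≤ ν) : 0 < Wc ν 0 - (ν^2 - 1/4) * Vc ν 0 := by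
  simp only [Wc, Vc, ucf, zero_add, sum_range_one, Nat.sub_zero, Nat.sub_self, Nat.cast_zero]
  nlinarith [bc_pos (by linarith : (-1:ℝ) < ν) 0]

lemma keyineq' {ν : ℝ} (hν : 1/2 ≤ ν) (n : ℕ) :
    4 * Vc ν n ≤ Wc ν (n+1) - (ν^2 - 1/4) * Vc ν (n+1) := by
  simpa [Wc, Vc, ucf] using keyineq hν n


end BesselAux

open BesselAux in
set_option maxHeartbeats 1000000 in
theorem besselI_ratio_lower_bound_03 (ν x : ℝ) (hν : 1 / 2 ≤ ν) (hx : 0 < x) :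
    besselI (ν - 1) x / besselI ν x >
      (ν - 1 / 2 + Real.sqrt (ν ^ 2 - 1 / 4 + x ^ 2)) / x := by
  have hν1 : (-1:ℝ) < ν := by linarith
  have hνh : -(1/2:ℝ) ≤ ν := by linarith
  obtain ⟨t, htdef⟩ : ∃ t : ℝ, t = x / 2 := ⟨_, rfl⟩
  have ht : 0 < t := by rw [htdef]; linarith
  obtain ⟨y, hydef⟩ : ∃ y : ℝ, y = t ^ 2 := ⟨_, rfl⟩
  have hy : 0 < y := by rw [hydef]; positivity
  -- summability
  have hsb : Summable (fun k : ℕ => bc ν k * y ^ k) := by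
    have h := summ_master (A := 1) (B := 0) (y := y) hνh hy zero_le_one le_rfl
    exact h.congr fun k => by ring
  have hsu : Summable (fun k : ℕ => ucf ν k * y ^ k) := by
    have h := summ_master (A := ν + 1/2) (B := 2) (y := y) hνh hy (by linarith) (by norm_num)
    exact h.congr fun k => by simp only [ucf]; ring
  obtain ⟨S, hSdef⟩ : ∃ S : ℝ, S = ∑' k : ℕ, bc ν k * y ^ k := ⟨_, rfl⟩
  obtain ⟨U, hUdef⟩ : ∃ U : ℝ, U = ∑' k : ℕ, ucf ν k * y ^ k := ⟨_, rfl⟩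
  have hbpos : ∀ k, 0 < bc ν k * y ^ k := fun k => mul_pos (bc_pos hν1 k) (by positivity)
  have hucpos : ∀ k, 0 < ucf ν k * y ^ k := fun k => by
    have : (0:ℝ) ≤ (k:ℝ) := Nat.cast_nonneg k
    exact mul_pos (mul_pos (by linarith) (bc_pos hν1 k)) (by positivity)
  have hS : 0 < S := by
    rw [hSdef]; exact Summable.tsum_pos hsb (fun k => (hbpos k).le) 0 (hbpos 0)
  have hU : 0 < U := by
    rw [hUdef]; exact Summable.tsum_pos hsu (fun k => (hucpos k).le) 0 (hucpos 0)
  have hnb : Summable (fun k : ℕ => ‖bc ν k * y ^ k‖) :=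
    hsb.congr fun k => by rw [Real.norm_eq_abs, abs_of_nonneg (hbpos k).le]
  have hnu : Summable (fun k : ℕ => ‖ucf ν k * y ^ k‖) :=
    hsu.congr fun k => by rw [Real.norm_eq_abs, abs_of_nonneg (hucpos k).le]
  -- Cauchy products
  have hcu : ∀ n : ℕ, ∑ k ∈ range (n+1), (ucf ν k * y ^ k) * (ucf ν (n-k) * y ^ (n-k))
      = Wc ν n * y ^ n := by
    intro n
    rw [Wc, sum_mul]
    refine sum_congr rfl fun k hk => ?_
    have hkn : k ≤ n := by simpa [Nat.lt_succ_iff] using hk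
    have hyy : y ^ k * y ^ (n-k) = y ^ n := by
      rw [← pow_add]; congr 1; omega
    rw [← hyy]; ring
  have hcb : ∀ n : ℕ, ∑ k ∈ range (n+1), (bc ν k * y ^ k) * (bc ν (n-k) * y ^ (n-k))
      = Vc ν n * y ^ n := by
    intro n
    rw [Vc, sum_mul]
    refine sum_congr rfl fun k hk => ?_
    have hkn : k ≤ n := by simpa [Nat.lt_succ_iff] using hk
    have hyy : y ^ k * y ^ (n-k) = y ^ n := by
      rw [← pow_add]; congr 1; omega
    rw [← hyy]; ring
  have hUU : U * U = ∑' n : ℕ, Wc ν n * y ^ n := by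
    rw [hUdef, tsum_mul_tsum_eq_tsum_sum_range_of_summable_norm hnu hnu]
    exact tsum_congr hcu
  have hSS : S * S = ∑' n : ℕ, Vc ν n * y ^ n := by
    rw [hSdef, tsum_mul_tsum_eq_tsum_sum_range_of_summable_norm hnb hnb]
    exact tsum_congr hcb
  have hsW : Summable (fun n : ℕ => Wc ν n * y ^ n) :=
    ((summable_norm_sum_mul_range_of_summable_norm hnu hnu).of_norm).congr hcu
  have hsV : Summable (fun n : ℕ => Vc ν n * y ^ n) :=
    ((summable_norm_sum_mul_range_of_summable_norm hnb hnb).of_norm).congr hcb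
  -- the core inequality
  have hx2 : x ^ 2 = 4 * y := by rw [hydef, htdef]; ring
  have hQ : (ν ^ 2 - 1/4 + x ^ 2) * (S * S) < U * U := by
    rw [hUU, hSS, hx2, ← sub_pos]
    have hsD : Summable (fun n : ℕ => Wc ν n * y ^ n - (ν^2 - 1/4) * (Vc ν n * y ^ n)) :=
      hsW.sub (hsV.mul_left _)
    have expand : ∑' n : ℕ, (Wc ν n * y ^ n - (ν^2 - 1/4) * (Vc ν n * y ^ n))
        = (∑' n : ℕ, Wc ν n * y ^ n) - (ν^2 - 1/4) * ∑' n : ℕ, Vc ν n * y ^ n := by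
      rw [Summable.tsum_sub hsW (hsV.mul_left _), tsum_mul_left]
    have hsD1 : Summable (fun n : ℕ =>
        Wc ν (n+1) * y ^ (n+1) - (ν^2 - 1/4) * (Vc ν (n+1) * y ^ (n+1))) :=
      (summable_nat_add_iff 1).mpr hsD
    have hs4 : Summable (fun n : ℕ => 4 * (Vc ν n * y ^ n) * y) := by
      have := (hsV.mul_left 4).mul_right y
      exact this.congr fun n => by ring
    have h4 : (4 * y) * ∑' n : ℕ, Vc ν n * y ^ n = ∑' n : ℕ, 4 * (Vc ν n * y ^ n) * y := by
      rw [← tsum_mul_left]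
      exact tsum_congr fun n => by ring
    have step : (∑' n : ℕ, Wc ν n * y ^ n) - (ν^2 - 1/4 + 4*y) * ∑' n : ℕ, Vc ν n * y ^ n
        = (Wc ν 0 * y ^ 0 - (ν^2 - 1/4) * (Vc ν 0 * y ^ 0))
          + ∑' n : ℕ, ((Wc ν (n+1) * y ^ (n+1) - (ν^2 - 1/4) * (Vc ν (n+1) * y ^ (n+1)))
              - 4 * (Vc ν n * y ^ n) * y) := by
      rw [Summable.tsum_sub hsD1 hs4, ← h4]
      have hzero := Summable.tsum_eq_zero_add hsD
      rw [expand] at hzero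
      linear_combination hzero
    rw [step]
    have hD0 : 0 < Wc ν 0 * y ^ 0 - (ν^2 - 1/4) * (Vc ν 0 * y ^ 0) := by
      rw [pow_zero, mul_one, mul_one]
      exact D0pos hν
    have htail : 0 ≤ ∑' n : ℕ, ((Wc ν (n+1) * y ^ (n+1) - (ν^2 - 1/4) * (Vc ν (n+1) * y ^ (n+1)))
        - 4 * (Vc ν n * y ^ n) * y) := by
      refine tsum_nonneg fun n => sub_nonneg.mpr ?_
      have h := keyineq' hν n
      have h2 := mul_le_mul_of_nonneg_right h (by positivity : (0:ℝ) ≤ y ^ (n+1))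
      calc 4 * (Vc ν n * y ^ n) * y = (4 * Vc ν n) * y ^ (n+1) := by rw [pow_succ]; ring
        _ ≤ (Wc ν (n+1) - (ν^2 - 1/4) * Vc ν (n+1)) * y ^ (n+1) := h2
        _ = Wc ν (n+1) * y ^ (n+1) - (ν^2 - 1/4) * (Vc ν (n+1) * y ^ (n+1)) := by ring
    linarith
  -- series representations
  have hbi1 : besselI ν x = t ^ ν * S := by
    rw [besselI_series hx, ← htdef, ← hydef, ← hSdef]
  have hbipos : 0 < besselI ν x := by
    rw [hbi1]
    exact mul_pos (Real.rpow_pos_of_pos ht ν) hS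
  have hbcrel : ∀ k : ℕ, 2 * bc (ν-1) k = ucf ν k + (ν - 1/2) * bc ν k := by
    intro k
    have hkν : (0:ℝ) < (k:ℝ) + ν := by
      have : (0:ℝ) ≤ (k:ℝ) := Nat.cast_nonneg k
      linarith
    have hg : (0:ℝ) < Real.Gamma ((k:ℝ) + ν) := Real.Gamma_pos_of_pos hkν
    have hf : (0:ℝ) < (k.factorial : ℝ) := by exact_mod_cast k.factorial_pos
    simp only [bc, ucf]
    rw [show (k:ℝ) + (ν-1) + 1 = (k:ℝ) + ν by ring,
      show (k:ℝ) + ν + 1 = ((k:ℝ) + ν) + 1 by ring,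
      Real.Gamma_add_one hkν.ne']
    field_simp
    ring
  have hxb : x * besselI (ν-1) x = t ^ ν * ((ν - 1/2) * S + U) := by
    rw [besselI_series hx (μ := ν - 1)]
    have htt : x * ((x/2) ^ (ν-1) * ∑' k : ℕ, bc (ν-1) k * ((x/2)^2) ^ k)
        = t ^ ν * (2 * ∑' k : ℕ, bc (ν-1) k * y ^ k) := by
      rw [← htdef, ← hydef]
      have hrp : t * t ^ (ν - 1) = t ^ ν := by
        nth_rewrite 1 [← Real.rpow_one t]
        rw [← Real.rpow_add ht]
        norm_num
      calc x * (t ^ (ν-1) * ∑' k : ℕ, bc (ν-1) k * y ^ k)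
          = (t * t ^ (ν-1)) * (2 * ∑' k : ℕ, bc (ν-1) k * y ^ k) := by
            rw [htdef]; ring
        _ = t ^ ν * (2 * ∑' k : ℕ, bc (ν-1) k * y ^ k) := by rw [hrp]
    rw [htt]
    congr 1
    have hsb1 : Summable (fun k : ℕ => bc (ν-1) k * y ^ k) := by
      have h := summ_master (μ := ν - 1) (A := 1) (B := 0) (y := y) (by linarith) hy
        zero_le_one le_rfl
      exact h.congr fun k => by ring
    have hsmul : Summable (fun k : ℕ => (ν - 1/2) * (bc ν k * y ^ k)) :=
      (summ_master (A := ν - 1/2) (B := 0) (y := y) hνh hy (by linarith) le_rfl).congr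
        fun k => by ring
    rw [← tsum_mul_left]
    rw [hSdef, hUdef, ← tsum_mul_left, ← Summable.tsum_add hsmul hsu]
    exact tsum_congr fun k => by linear_combination y ^ k * (hbcrel k)
  -- final comparison
  obtain ⟨c, hcdef⟩ : ∃ c : ℝ, c = Real.sqrt (ν ^ 2 - 1 / 4 + x ^ 2) := ⟨_, rfl⟩
  rw [← hcdef]
  have harg : 0 ≤ ν ^ 2 - 1 / 4 + x ^ 2 := by nlinarith
  have hc2 : c ^ 2 = ν ^ 2 - 1 / 4 + x ^ 2 := by rw [hcdef]; exact Real.sq_sqrt harg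
  have hc0 : 0 ≤ c := by rw [hcdef]; exact Real.sqrt_nonneg _
  have hUc : c * S < U := by
    nlinarith [hQ, hc2, hU, hS, mul_nonneg hc0 hS.le]
  rw [gt_iff_lt, div_lt_div_iff₀ hx hbipos]
  calc (ν - 1 / 2 + c) * besselI ν x = t ^ ν * ((ν - 1 / 2 + c) * S) := by rw [hbi1]; ring
    _ < t ^ ν * ((ν - 1 / 2) * S + U) := by
        apply mul_lt_mul_of_pos_left ?_ (Real.rpow_pos_of_pos ht ν)
        nlinarith [hUc]
    _ = besselI (ν - 1) x * x := by rw [← hxb]; ring
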